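/- Every DPL formula φ of modal degree ≤ n either is unsatisfiable in all structures over all extensions V' of the vocabulary V, or is equivalent (at every world of every structure over every extension V' ⊇ V) to a finite disjunction of normal form formulae of degree n. -/

import Mathlib

/-- Boolean action terms over a set `A` of primitive actions. -/
inductive ActTerm (A : Type) : Type
  | prim  : A → ActTerm A
  | meet  : ActTerm A → ActTerm A → ActTerm A
  | join  : ActTerm A → ActTerm A → ActTerm A
  | compl : ActTerm A → ActTerm A
  | empty : ActTerm A
  | univ  : ActTerm A

/-- Formulae of the deontic action logic DPL over primitive actions `A`
    and propositional variables `P`. -/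
inductive Form (A P : Type) : Type
  | prop  : P → Form A P
  | neg   : Form A P → Form A P
  | imp   : Form A P → Form A P → Form A P
  | box   : ActTerm A → Form A P → Form A P
  | sperm : ActTerm A → Form A P            -- strong permission P(α)
  | wperm : ActTerm A → Form A P            -- weak permission Pw(α)
  | eq    : ActTerm A → ActTerm A → Form A P

/-- Diamond `⟨α⟩φ := ¬[α]¬φ`. -/
def Form.dia {A P : Type} (α : ActTerm A) (φ : Form A P) : Form A P :=
  .neg (.box α (.neg φ))

/-- Conjunction. -/
def Form.and {A P : Type} (φ ψ : Form A P) : Form A P := .neg (.imp φ (.neg ψ))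

/-- Disjunction. -/
def Form.or {A P : Type} (φ ψ : Form A P) : Form A P := .imp (.neg φ) ψ

/-- Biconditional. -/
def Form.iff {A P : Type} (φ ψ : Form A P) : Form A P := (φ.imp ψ).and (ψ.imp φ)

/-- DPL structures over the vocabulary `⟨A, P⟩` (def. 1 of the paper):
worlds, events, a deterministic event-labeled transition relation,
a permission relation and an interpretation satisfying I.1, I.2, I.3. -/
structure DPLStruct (A P : Type) where
  W : Type
  E : Type
  nonemptyE : Nonempty E
  R : W → W → E → Prop
  det : ∀ w w' w'' e, R w w' e → R w w'' e → w' = w''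
  Perm : W → E → Prop
  Iprop : P → Set W
  Iact : A → Set E
  I1 : ∀ a : A, (Iact a \ ⋃ (b : A) (_ : b ≠ a), Iact b).Subsingleton
  I2 : ∀ (e : E) (a b : A), a ≠ b → e ∈ Iact a → e ∈ Iact b →
        (⋂ (c : A) (_ : e ∈ Iact c), Iact c) = {e}
  I3 : (⋃ a : A, Iact a) = Set.univ

/-- Interpretation of action terms as sets of events. -/
def ActTerm.interp {A P : Type} (M : DPLStruct A P) : ActTerm A → Set M.E
  | .prim a => M.Iact a
  | .meet α β => α.interp M ∩ β.interp M
  | .join α β => α.interp M ∪ β.interp M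
  | .compl α => (α.interp M)ᶜ
  | .empty => ∅
  | .univ => Set.univ

/-- Satisfaction of DPL formulae at a world of a structure. -/
def Sat {A P : Type} (M : DPLStruct A P) : M.W → Form A P → Prop
  | w, .prop p => w ∈ M.Iprop p
  | w, .neg φ => ¬ Sat M w φ
  | w, .imp φ ψ => Sat M w φ → Sat M w ψ
  | w, .box α φ => ∀ e ∈ α.interp M, ∀ w', M.R w w' e → Sat M w' φ
  | w, .sperm α => ∀ e ∈ α.interp M, M.Perm w e
  | w, .wperm α => ∃ e ∈ α.interp M, M.Perm w e
  | w, .eq α β => α.interp M = β.interp M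
/-- Modal degree of a formula (permissions and equations count as degree 0). -/
def Form.deg {A P : Type} : Form A P → ℕ
  | .neg φ => φ.deg
  | .imp φ ψ => max φ.deg ψ.deg
  | .box _ φ => φ.deg + 1
  | _ => 0

/-- Degree-0 literals: propositional variables, deontic predicates,
and their negations. -/
inductive Lit0 {A P : Type} : Form A P → Prop
  | prop (p : P) : Lit0 (.prop p)
  | negprop (p : P) : Lit0 (.neg (.prop p))
  | sperm (α : ActTerm A) : Lit0 (.sperm α)
  | negsperm (α : ActTerm A) : Lit0 (.neg (.sperm α))
  | wperm (α : ActTerm A) : Lit0 (.wperm α)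
  | negwperm (α : ActTerm A) : Lit0 (.neg (.wperm α))

/-- `F₀`: conjunctions of degree-0 literals. -/
inductive NF0 {A P : Type} : Form A P → Prop
  | lit {φ} : Lit0 φ → NF0 φ
  | and {φ ψ} : NF0 φ → NF0 ψ → NF0 (φ.and ψ)

/-- Auxiliary family: `NFAux false n φ` says `φ ∈ Fₙ` (normal form of degree
`n`); `NFAux true n φ` says `φ` is a conjunction of formulae `⟨α⟩ψ` or
`¬⟨α⟩ψ` with `ψ ∈ Fₙ`. -/
inductive NFAux {A P : Type} : Bool → ℕ → Form A P → Prop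
  | zero {φ} : NF0 φ → NFAux false 0 φ
  | dia {n φ} (α : ActTerm A) : NFAux false n φ → NFAux true n (Form.dia α φ)
  | negdia {n φ} (α : ActTerm A) :
      NFAux false n φ → NFAux true n (.neg (Form.dia α φ))
  | conj {n φ ψ} : NFAux true n φ → NFAux true n ψ → NFAux true n (φ.and ψ)
  | lift {n φ} : NFAux true n φ → NFAux false (n + 1) φ
  | withTheta {n θ φ} : NF0 θ → NFAux true n φ → NFAux false (n + 1) (θ.and φ)

/-- Normal form formulae of degree `n`. -/
def NF {A P : Type} (n : ℕ) (φ : Form A P) : Prop := NFAux false n φ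

/-- Renaming of primitive actions along a vocabulary map. -/
def ActTerm.map {A A' : Type} (f : A → A') : ActTerm A → ActTerm A'
  | .prim a => .prim (f a)
  | .meet α β => .meet (α.map f) (β.map f)
  | .join α β => .join (α.map f) (β.map f)
  | .compl α => .compl (α.map f)
  | .empty => .empty
  | .univ => .univ

/-- Renaming of primitive actions in a formula along a vocabulary map. -/
def Form.map {A A' P : Type} (f : A → A') : Form A P → Form A' P
  | .prop p => .prop p
  | .neg φ => .neg (φ.map f)
  | .imp φ ψ => .imp (φ.map f) (ψ.map f)
  | .box α φ => .box (α.map f) (φ.map f)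
  | .sperm α => .sperm (α.map f)
  | .wperm α => .wperm (α.map f)
  | .eq α β => .eq (α.map f) (β.map f)

/-- Negation with simplification of double negations. -/
def Form.simpNeg {A P : Type} : Form A P → Form A P
  | .neg φ => φ
  | φ => .neg φ

/-- The set `SF(φ, k)` of subformulae of a normal form formula at level `k`. -/
def SF {A P : Type} : Form A P → ℕ → Set (Form A P)
  | .neg (.imp φ (.neg ψ)), k => SF φ k ∪ SF ψ k
  | .neg (.neg (.box α (.neg ψ))), 0 => {.neg (.neg (.box α (.neg ψ)))}
  | .neg (.neg (.box _ (.neg ψ))), k + 1 => Form.simpNeg '' SF ψ k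
  | .neg (.box α (.neg ψ)), 0 => {.neg (.box α (.neg ψ))}
  | .neg (.box _ (.neg ψ)), k + 1 => SF ψ k
  | φ, 0 => {φ}
  | _, _ + 1 => ∅

/-- Existential formulae: `Pw(α)`, `¬P(α)` and `⟨α⟩ψ`. -/
inductive Existential {A P : Type} : Form A P → Prop
  | wperm (α : ActTerm A) : Existential (.wperm α)
  | negsperm (α : ActTerm A) : Existential (.neg (.sperm α))
  | dia (α : ActTerm A) (φ : Form A P) : Existential (Form.dia α φ)

/-- The existential degree `D_∃(φ)`: the maximum, over the levels
`0 ≤ k ≤ d(φ)`, of the number of existential formulae in `SF(φ, k)`. -/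
noncomputable def Dexists {A P : Type} (φ : Form A P) : ℕ :=
  (Finset.range (φ.deg + 1)).sup
    fun k => (SF φ k ∩ {ψ | Existential ψ}).ncard

/-- Primitive actions occurring in an action term. -/
def ActTerm.prims {A : Type} [DecidableEq A] : ActTerm A → Finset A
  | .prim a => {a}
  | .meet α β => α.prims ∪ β.prims
  | .join α β => α.prims ∪ β.prims
  | .compl α => α.prims
  | .empty => ∅
  | .univ => ∅

/-- Primitive actions occurring in a formula (`Pr(φ)`). -/
def Form.prims {A P : Type} [DecidableEq A] : Form A P → Finset A
  | .prop _ => ∅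
  | .neg φ => φ.prims
  | .imp φ ψ => φ.prims ∪ ψ.prims
  | .box α φ => α.prims ∪ φ.prims
  | .sperm α => α.prims
  | .wperm α => α.prims
  | .eq α β => α.prims ∪ β.prims

/-- Disjunction of a list of formulae. -/
def bigOr {A P : Type} : List (Form A P) → Form A P
  | [] => .neg (.eq .empty .empty)
  | [φ] => φ
  | φ :: l => φ.or (bigOr l)

namespace NFT
variable {A A' P : Type}

lemma sat_neg (M : DPLStruct A P) (w : M.W) (φ : Form A P) :
    Sat M w (.neg φ) ↔ ¬ Sat M w φ := Iff.rfl

lemma sat_imp (M : DPLStruct A P) (w : M.W) (φ ψ : Form A P) :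
    Sat M w (.imp φ ψ) ↔ (Sat M w φ → Sat M w ψ) := Iff.rfl

lemma sat_box (M : DPLStruct A P) (w : M.W) (α : ActTerm A) (φ : Form A P) :
    Sat M w (.box α φ) ↔ ∀ e ∈ α.interp M, ∀ w', M.R w w' e → Sat M w' φ := Iff.rfl

lemma sat_and (M : DPLStruct A P) (w : M.W) (φ ψ : Form A P) :
    Sat M w (φ.and ψ) ↔ Sat M w φ ∧ Sat M w ψ := by
  simp only [Form.and, sat_neg, sat_imp]; tauto

lemma sat_or (M : DPLStruct A P) (w : M.W) (φ ψ : Form A P) :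
    Sat M w (φ.or ψ) ↔ Sat M w φ ∨ Sat M w ψ := by
  simp only [Form.or, sat_neg, sat_imp]; tauto

lemma sat_dia (M : DPLStruct A P) (w : M.W) (α : ActTerm A) (φ : Form A P) :
    Sat M w (Form.dia α φ) ↔ ∃ e ∈ α.interp M, ∃ w', M.R w w' e ∧ Sat M w' φ := by
  simp only [Form.dia, sat_neg, sat_box]
  push_neg
  simp only [not_not]

lemma map_and (f : A → A') (φ ψ : Form A P) :
    (φ.and ψ).map f = (φ.map f).and (ψ.map f) := rfl

lemma map_or (f : A → A') (φ ψ : Form A P) :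
    (φ.or ψ).map f = (φ.map f).or (ψ.map f) := rfl

lemma map_dia (f : A → A') (α : ActTerm A) (φ : Form A P) :
    (Form.dia α φ).map f = Form.dia (α.map f) (φ.map f) := rfl

lemma sat_bigOr_map (f : A → A') (M : DPLStruct A' P) (w : M.W) :
    ∀ l : List (Form A P),
      Sat M w ((bigOr l).map f) ↔ ∃ ψ ∈ l, Sat M w (ψ.map f) := by
  intro l
  induction l with
  | nil => simp [bigOr, Form.map, Sat]
  | cons a l ih =>
    cases l with
    | nil => simp [bigOr]
    | cons b l' =>
      rw [show bigOr (a :: b :: l') = a.or (bigOr (b :: l')) from rfl, map_or, sat_or, ih]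
      simp only [List.mem_cons, exists_eq_or_imp]

end NFT
namespace NFT
variable {A A' P : Type}

/-- A canonical member of `Fₙ` for each `n` (valid for `n ≥ 1`). -/
def nfmem : ℕ → Form A P
  | 0 => .sperm .univ
  | n + 1 => .neg (Form.dia .empty (nfmem n))

lemma nfmem_nf : ∀ n, NFAux false n (nfmem (A := A) (P := P) n)
  | 0 => .zero (.lit (.sperm _))
  | n + 1 => .lift (.negdia _ (nfmem_nf n))

lemma nfmem_map (f : A → A') : ∀ n, (nfmem (P := P) n).map f = nfmem n
  | 0 => rfl
  | n + 1 => by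
    simp only [nfmem, Form.map, Form.dia, ActTerm.map, nfmem_map f n]

lemma not_sat_dia_empty (M : DPLStruct A P) (w : M.W) (φ : Form A P) :
    ¬ Sat M w (Form.dia .empty φ) := by
  rw [sat_dia]
  rintro ⟨e, he, -⟩
  exact he

/-- Pad a degree-0 conjunction of literals to an `Fₙ` formula. -/
def pad (θ : Form A P) : ℕ → Form A P
  | 0 => θ
  | n + 1 => θ.and (.neg (Form.dia .empty (nfmem n)))

lemma pad_nf {θ : Form A P} (hθ : NF0 θ) : ∀ n, NFAux false n (pad θ n)
  | 0 => .zero hθ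
  | n + 1 => .withTheta hθ (.negdia _ (nfmem_nf n))

lemma pad_map (f : A → A') (θ : Form A P) : ∀ n, (pad θ n).map f = pad (θ.map f) n
  | 0 => rfl
  | n + 1 => by
    show (θ.and (.neg (Form.dia .empty (nfmem n)))).map f = _
    rw [map_and]
    show (θ.map f).and (.neg (Form.dia .empty ((nfmem n).map f))) = _
    rw [nfmem_map]
    rfl

lemma sat_pad (M : DPLStruct A P) (w : M.W) (θ : Form A P) :
    ∀ n, Sat M w (pad θ n) ↔ Sat M w θ
  | 0 => Iff.rfl
  | n + 1 => by
    rw [pad, sat_and, sat_neg]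
    exact and_iff_left (not_sat_dia_empty M w _)

end NFT
namespace NFT
variable {A A' P : Type}

/-- The conjunction of two `Fₙ` formulae is equivalent to an `Fₙ` formula. -/
lemma merge1 {n : ℕ} {x y : Form A P} (hx : NFAux false n x) (hy : NFAux false n y) :
    ∃ z : Form A P, NFAux false n z ∧
      ∀ (A' : Type) (f : A → A') (M : DPLStruct A' P) (w : M.W),
        Sat M w (z.map f) ↔ Sat M w (x.map f) ∧ Sat M w (y.map f) := by
  cases n with
  | zero =>
    cases hx with
    | zero h0x =>
      cases hy with
      | zero h0y =>
        refine ⟨x.and y, .zero (.and h0x h0y), fun A' f M w => ?_⟩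
        rw [map_and, sat_and]
  | succ n =>
    cases hx with
    | lift hC1 =>
      cases hy with
      | lift hC2 =>
        refine ⟨x.and y, .lift (.conj hC1 hC2), fun A' f M w => ?_⟩
        rw [map_and, sat_and]
      | withTheta hθ hC2 =>
        rename_i θ C2
        refine ⟨θ.and (x.and C2), .withTheta hθ (.conj hC1 hC2), fun A' f M w => ?_⟩
        simp only [map_and, sat_and]
        tauto
    | withTheta hθ hC1 =>
      rename_i θ C1
      cases hy with
      | lift hC2 =>
        refine ⟨θ.and (C1.and y), .withTheta hθ (.conj hC1 hC2), fun A' f M w => ?_⟩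
        simp only [map_and, sat_and]
        tauto
      | withTheta hθ2 hC2 =>
        rename_i θ2 C2
        refine ⟨(θ.and θ2).and (C1.and C2), .withTheta (.and hθ hθ2) (.conj hC1 hC2),
          fun A' f M w => ?_⟩
        simp only [map_and, sat_and]
        tauto

lemma mergeOne {n : ℕ} {x : Form A P} (hx : NFAux false n x) :
    ∀ l : List (Form A P), l ≠ [] → (∀ ψ ∈ l, NFAux false n ψ) →
      ∃ l₃ : List (Form A P), l₃ ≠ [] ∧ (∀ ψ ∈ l₃, NFAux false n ψ) ∧
        ∀ (A' : Type) (f : A → A') (M : DPLStruct A' P) (w : M.W),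
          (∃ z ∈ l₃, Sat M w (z.map f)) ↔
            Sat M w (x.map f) ∧ ∃ y ∈ l, Sat M w (y.map f) := by
  intro l
  induction l with
  | nil => intro h; exact absurd rfl h
  | cons b bs ih =>
    intro _ hmem
    obtain ⟨z, hz, hzsem⟩ := merge1 hx (hmem b (List.mem_cons_self))
    cases bs with
    | nil =>
      refine ⟨[z], by simp, by simpa using hz, fun A' f M w => ?_⟩
      simp only [List.mem_singleton, List.mem_cons, List.not_mem_nil, or_false,
        exists_eq_left, hzsem]
    | cons c cs =>
      obtain ⟨l₃', hne', hnf', hsem'⟩ :=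
        ih (by simp) (fun ψ hψ => hmem ψ (List.mem_cons_of_mem _ hψ))
      refine ⟨z :: l₃', by simp, ?_, fun A' f M w => ?_⟩
      · intro ψ hψ
        rcases List.mem_cons.1 hψ with rfl | h
        · exact hz
        · exact hnf' ψ h
      · constructor
        · rintro ⟨u, hu, husat⟩
          rcases List.mem_cons.1 hu with rfl | h
          · obtain ⟨h1, h2⟩ := (hzsem A' f M w).1 husat
            exact ⟨h1, b, List.mem_cons_self, h2⟩
          · obtain ⟨h1, y, hy, h2⟩ := (hsem' A' f M w).1 ⟨u, h, husat⟩
            exact ⟨h1, y, List.mem_cons_of_mem _ hy, h2⟩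
        · rintro ⟨h1, y, hy, h2⟩
          rcases List.mem_cons.1 hy with rfl | h
          · exact ⟨z, List.mem_cons_self, (hzsem A' f M w).2 ⟨h1, h2⟩⟩
          · obtain ⟨u, hu, husat⟩ := (hsem' A' f M w).2 ⟨h1, y, h, h2⟩
            exact ⟨u, List.mem_cons_of_mem _ hu, husat⟩

lemma mergeLists {n : ℕ} :
    ∀ l₁ l₂ : List (Form A P), l₁ ≠ [] → l₂ ≠ [] →
      (∀ ψ ∈ l₁, NFAux false n ψ) → (∀ ψ ∈ l₂, NFAux false n ψ) →
      ∃ l₃ : List (Form A P), l₃ ≠ [] ∧ (∀ ψ ∈ l₃, NFAux false n ψ) ∧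
        ∀ (A' : Type) (f : A → A') (M : DPLStruct A' P) (w : M.W),
          (∃ z ∈ l₃, Sat M w (z.map f)) ↔
            (∃ x ∈ l₁, Sat M w (x.map f)) ∧ ∃ y ∈ l₂, Sat M w (y.map f) := by
  intro l₁
  induction l₁ with
  | nil => intro l₂ h; exact absurd rfl h
  | cons a as ih =>
    intro l₂ _ hne₂ hmem₁ hmem₂
    obtain ⟨la, hnea, hnfa, hsema⟩ :=
      mergeOne (hmem₁ a (List.mem_cons_self)) l₂ hne₂ hmem₂
    cases as with
    | nil =>
      refine ⟨la, hnea, hnfa, fun A' f M w => ?_⟩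
      rw [hsema]
      simp
    | cons c cs =>
      obtain ⟨l₃', hne', hnf', hsem'⟩ :=
        ih l₂ (by simp) hne₂ (fun ψ hψ => hmem₁ ψ (List.mem_cons_of_mem _ hψ)) hmem₂
      refine ⟨la ++ l₃', by simp [hnea], fun ψ hψ => ?_, fun A' f M w => ?_⟩
      · rcases List.mem_append.1 hψ with h | h
        · exact hnfa ψ h
        · exact hnf' ψ h
      · constructor
        · rintro ⟨u, hu, husat⟩
          rcases List.mem_append.1 hu with h | h
          · obtain ⟨h1, h2⟩ := (hsema A' f M w).1 ⟨u, h, husat⟩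
            exact ⟨⟨a, List.mem_cons_self, h1⟩, h2⟩
          · obtain ⟨⟨x, hx, h1⟩, h2⟩ := (hsem' A' f M w).1 ⟨u, h, husat⟩
            exact ⟨⟨x, List.mem_cons_of_mem _ hx, h1⟩, h2⟩
        · rintro ⟨⟨x, hx, h1⟩, h2⟩
          rcases List.mem_cons.1 hx with rfl | h
          · obtain ⟨u, hu, husat⟩ := (hsema A' f M w).2 ⟨h1, h2⟩
            exact ⟨u, List.mem_append_left _ hu, husat⟩
          · obtain ⟨u, hu, husat⟩ := (hsem' A' f M w).2 ⟨⟨x, h, h1⟩, h2⟩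
            exact ⟨u, List.mem_append_right _ hu, husat⟩

end NFT
namespace NFT
variable {A A' P : Type}

/-- Symmetric difference of action terms. -/
def sdf (α β : ActTerm A) : ActTerm A :=
  .join (.meet α (.compl β)) (.meet β (.compl α))

lemma sdf_map (f : A → A') (α β : ActTerm A) :
    (sdf α β).map f = sdf (α.map f) (β.map f) := rfl

lemma interp_sdf {M : DPLStruct A P} (α β : ActTerm A) :
    (sdf α β).interp M = ∅ ↔ α.interp M = β.interp M := by
  simp only [sdf, ActTerm.interp, Set.union_empty_iff, ← Set.diff_eq,
    Set.diff_eq_empty]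
  constructor
  · rintro ⟨h1, h2⟩; exact le_antisymm h1 h2
  · intro h; exact ⟨h.le, h.ge⟩

lemma eq_pos (M : DPLStruct A P) (w : M.W) (α β : ActTerm A) :
    Sat M w (.eq α β) ↔
      Sat M w ((Form.sperm (sdf α β)).and (.neg (.wperm (sdf α β)))) := by
  rw [sat_and, sat_neg]
  show α.interp M = β.interp M ↔
    (∀ e ∈ (sdf α β).interp M, M.Perm w e) ∧ ¬ ∃ e ∈ (sdf α β).interp M, M.Perm w e
  rw [← interp_sdf]
  constructor
  · intro h; rw [h]; simp
  · rintro ⟨hs, hw⟩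
    ext e
    simp only [Set.mem_empty_iff_false, iff_false]
    intro he
    exact hw ⟨e, he, hs e he⟩

lemma eq_neg (M : DPLStruct A P) (w : M.W) (α β : ActTerm A) :
    ¬ Sat M w (.eq α β) ↔
      Sat M w (.neg (.sperm (sdf α β))) ∨ Sat M w (.wperm (sdf α β)) := by
  rw [sat_neg]
  show ¬ (α.interp M = β.interp M) ↔
    (¬ ∀ e ∈ (sdf α β).interp M, M.Perm w e) ∨ ∃ e ∈ (sdf α β).interp M, M.Perm w e
  rw [← interp_sdf]
  constructor
  · intro h
    obtain ⟨e, he⟩ := Set.nonempty_iff_ne_empty.2 h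
    by_cases hp : M.Perm w e
    · exact Or.inr ⟨e, he, hp⟩
    · exact Or.inl fun hall => hp (hall e he)
  · rintro (h | ⟨e, he, hp⟩) h0
    · exact h fun e he => absurd (h0 ▸ he) (Set.notMem_empty e)
    · exact Set.notMem_empty e (h0 ▸ he)

/-- Conjunction of `¬⟨α⟩ψ` over a nonempty list, as a true-level normal form. -/
lemma negdiaList {m : ℕ} (α : ActTerm A) :
    ∀ l : List (Form A P), l ≠ [] → (∀ ψ ∈ l, NFAux false m ψ) →
      ∃ z : Form A P, NFAux true m z ∧
        ∀ (A' : Type) (f : A → A') (M : DPLStruct A' P) (w : M.W),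
          Sat M w (z.map f) ↔ ∀ ψ ∈ l, ¬ Sat M w ((Form.dia α ψ).map f) := by
  intro l
  induction l with
  | nil => intro h; exact absurd rfl h
  | cons a as ih =>
    intro _ hmem
    cases as with
    | nil =>
      refine ⟨.neg (Form.dia α a), .negdia α (hmem a (List.mem_cons_self)),
        fun A' f M w => ?_⟩
      simp only [List.mem_singleton, List.mem_cons, List.not_mem_nil, or_false,
        forall_eq]
      exact Iff.rfl
    | cons c cs =>
      obtain ⟨z', hz', hsem'⟩ := ih (by simp) (fun ψ hψ => hmem ψ (List.mem_cons_of_mem _ hψ))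
      refine ⟨(Form.neg (Form.dia α a)).and z',
        .conj (.negdia α (hmem a (List.mem_cons_self))) hz', fun A' f M w => ?_⟩
      rw [map_and, sat_and, hsem']
      constructor
      · rintro ⟨h1, h2⟩ ψ hψ
        rcases List.mem_cons.1 hψ with rfl | h
        · exact h1
        · exact h2 ψ h
      · intro h
        exact ⟨h a (List.mem_cons_self), fun ψ hψ => h ψ (List.mem_cons_of_mem _ hψ)⟩

end NFT
namespace NFT
variable {A P : Type}

lemma main (φ : Form A P) : ∀ n : ℕ, φ.deg ≤ n →
    ∃ l l' : List (Form A P), l ≠ [] ∧ l' ≠ [] ∧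
      (∀ ψ ∈ l, NF n ψ) ∧ (∀ ψ ∈ l', NF n ψ) ∧
      (∀ (A' : Type) (f : A → A') (M : DPLStruct A' P) (w : M.W),
          Sat M w (φ.map f) ↔ ∃ ψ ∈ l, Sat M w (ψ.map f)) ∧
      (∀ (A' : Type) (f : A → A') (M : DPLStruct A' P) (w : M.W),
          ¬ Sat M w (φ.map f) ↔ ∃ ψ ∈ l', Sat M w (ψ.map f)) := by
  induction φ with
  | prop p =>
    intro n _
    refine ⟨[pad (.prop p) n], [pad (.neg (.prop p)) n], by simp, by simp,
      by simpa [NF] using pad_nf (.lit (.prop p)) n,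
      by simpa [NF] using pad_nf (.lit (.negprop p)) n,
      fun A' f M w => ?_, fun A' f M w => ?_⟩ <;>
    · simp only [List.mem_singleton, exists_eq_left, pad_map, sat_pad]
      try exact Iff.rfl
  | sperm α =>
    intro n _
    refine ⟨[pad (.sperm α) n], [pad (.neg (.sperm α)) n], by simp, by simp,
      by simpa [NF] using pad_nf (.lit (.sperm α)) n,
      by simpa [NF] using pad_nf (.lit (.negsperm α)) n,
      fun A' f M w => ?_, fun A' f M w => ?_⟩ <;>
    · simp only [List.mem_singleton, exists_eq_left, pad_map, sat_pad]
      try exact Iff.rfl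
  | wperm α =>
    intro n _
    refine ⟨[pad (.wperm α) n], [pad (.neg (.wperm α)) n], by simp, by simp,
      by simpa [NF] using pad_nf (.lit (.wperm α)) n,
      by simpa [NF] using pad_nf (.lit (.negwperm α)) n,
      fun A' f M w => ?_, fun A' f M w => ?_⟩ <;>
    · simp only [List.mem_singleton, exists_eq_left, pad_map, sat_pad]
      try exact Iff.rfl
  | eq α β =>
    intro n _
    refine ⟨[pad ((Form.sperm (sdf α β)).and (.neg (.wperm (sdf α β)))) n],
      [pad (.neg (.sperm (sdf α β))) n, pad (.wperm (sdf α β)) n], by simp, by simp,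
      by simpa [NF] using pad_nf (.and (.lit (.sperm _)) (.lit (.negwperm _))) n,
      ?_, fun A' f M w => ?_, fun A' f M w => ?_⟩
    · intro ψ hψ
      rcases List.mem_cons.1 hψ with rfl | hψ
      · exact pad_nf (.lit (.negsperm _)) n
      · rcases List.mem_singleton.1 hψ with rfl
        exact pad_nf (.lit (.wperm _)) n
    · simp only [List.mem_singleton, exists_eq_left, pad_map, sat_pad]
      exact eq_pos M w (α.map f) (β.map f)
    · simp only [List.mem_cons, List.mem_singleton, exists_eq_or_imp,
        exists_eq_left, pad_map, sat_pad, List.not_mem_nil, false_and, exists_false,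
        or_false]
      exact eq_neg M w (α.map f) (β.map f)
  | neg φ ih =>
    intro n hn
    obtain ⟨l, l', hne, hne', hnf, hnf', hpos, hneg⟩ := ih n hn
    refine ⟨l', l, hne', hne, hnf', hnf, fun A' f M w => hneg A' f M w,
      fun A' f M w => ?_⟩
    rw [show (Form.neg φ).map f = .neg (φ.map f) from rfl, sat_neg, not_not]
    exact hpos A' f M w
  | imp φ ψ ihφ ihψ =>
    intro n hn
    have hφ : φ.deg ≤ n := le_trans (le_max_left _ _) hn
    have hψd : ψ.deg ≤ n := le_trans (le_max_right _ _) hn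
    obtain ⟨lφ, lφ', hneφ, hneφ', hnfφ, hnfφ', hposφ, hnegφ⟩ := ihφ n hφ
    obtain ⟨lψ, lψ', hneψ, hneψ', hnfψ, hnfψ', hposψ, hnegψ⟩ := ihψ n hψd
    obtain ⟨l₃, hne₃, hnf₃, hsem₃⟩ := mergeLists lφ lψ' hneφ hneψ' hnfφ hnfψ'
    refine ⟨lφ' ++ lψ, l₃, by simp [hneφ'], hne₃, ?_, hnf₃,
      fun A' f M w => ?_, fun A' f M w => ?_⟩
    · intro x hx
      rcases List.mem_append.1 hx with h | h
      · exact hnfφ' x h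
      · exact hnfψ x h
    · rw [show (Form.imp φ ψ).map f = .imp (φ.map f) (ψ.map f) from rfl, sat_imp]
      constructor
      · intro h
        by_cases hsφ : Sat M w (φ.map f)
        · obtain ⟨x, hx, hs⟩ := (hposψ A' f M w).1 (h hsφ)
          exact ⟨x, List.mem_append_right _ hx, hs⟩
        · obtain ⟨x, hx, hs⟩ := (hnegφ A' f M w).1 hsφ
          exact ⟨x, List.mem_append_left _ hx, hs⟩
      · rintro ⟨x, hx, hs⟩ hsφ
        rcases List.mem_append.1 hx with h | h
        · exact absurd hsφ ((hnegφ A' f M w).2 ⟨x, h, hs⟩)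
        · exact (hposψ A' f M w).2 ⟨x, h, hs⟩
    · rw [show (Form.imp φ ψ).map f = .imp (φ.map f) (ψ.map f) from rfl, sat_imp]
      have key : (¬ (Sat M w (φ.map f) → Sat M w (ψ.map f))) ↔
          Sat M w (φ.map f) ∧ ¬ Sat M w (ψ.map f) := by tauto
      rw [key, hposφ A' f M w, hnegψ A' f M w]
      exact (hsem₃ A' f M w).symm
  | box α φ ih =>
    intro n hn
    have hn' : φ.deg + 1 ≤ n := hn
    obtain ⟨m, rfl⟩ : ∃ m, n = m + 1 := ⟨n - 1, by omega⟩
    obtain ⟨lφ, lφ', hneφ, hneφ', hnfφ, hnfφ', hposφ, hnegφ⟩ :=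
      ih m (by omega)
    obtain ⟨z, hz, hzsem⟩ := negdiaList α lφ' hneφ' hnfφ'
    refine ⟨[z], lφ'.map (Form.dia α), by simp, by simp [hneφ'],
      by simpa [NF] using NFAux.lift hz, ?_, fun A' f M w => ?_, fun A' f M w => ?_⟩
    · rintro ζ hζ
      obtain ⟨ψ, hψ, rfl⟩ := List.mem_map.1 hζ
      exact NFAux.lift (.dia α (hnfφ' ψ hψ))
    · simp only [List.mem_singleton, exists_eq_left]
      rw [hzsem A' f M w,
        show (Form.box α φ).map f = .box (α.map f) (φ.map f) from rfl, sat_box]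
      constructor
      · intro h ψ hψ hd
        rw [map_dia, sat_dia] at hd
        obtain ⟨e, he, w', hr, hs⟩ := hd
        exact (hnegφ A' f M w').2 ⟨ψ, hψ, hs⟩ (h e he w' hr)
      · intro h e he w' hr
        by_contra hns
        obtain ⟨ψ, hψ, hs⟩ := (hnegφ A' f M w').1 hns
        exact h ψ hψ (by rw [map_dia, sat_dia]; exact ⟨e, he, w', hr, hs⟩)
    · rw [show (Form.box α φ).map f = .box (α.map f) (φ.map f) from rfl, sat_box]
      constructor
      · intro h
        push_neg at h
        obtain ⟨e, he, w', hr, hns⟩ := h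
        obtain ⟨ψ, hψ, hs⟩ := (hnegφ A' f M w').1 hns
        exact ⟨Form.dia α ψ, List.mem_map_of_mem hψ,
          by rw [map_dia, sat_dia]; exact ⟨e, he, w', hr, hs⟩⟩
      · rintro ⟨ζ, hζ, hsat⟩ hb
        obtain ⟨ψ, hψ, rfl⟩ := List.mem_map.1 hζ
        rw [map_dia, sat_dia] at hsat
        obtain ⟨e, he, w', hr, hs⟩ := hsat
        exact (hnegφ A' f M w').2 ⟨ψ, hψ, hs⟩ (hb e he w' hr)

end NFT
/-- Fine-style normal form theorem for DPL: every formula `φ` of modal degree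
`≤ n` either is unsatisfiable in every structure over every extension of the
vocabulary, or is equivalent, at every world of every structure over every
extension of the vocabulary, to a finite (nonempty) disjunction of normal form
formulae of degree `n`. -/
theorem normal_form_theorem {A P : Type} (φ : Form A P) (n : ℕ)
    (hdeg : φ.deg ≤ n) :
    (∀ (A' : Type) (f : A → A'), Function.Injective f →
        ∀ (M : DPLStruct A' P) (w : M.W), ¬ Sat M w (φ.map f)) ∨
    (∃ l : List (Form A P), l ≠ [] ∧ (∀ ψ ∈ l, NF n ψ) ∧
      ∀ (A' : Type) (f : A → A'), Function.Injective f →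
        ∀ (M : DPLStruct A' P) (w : M.W),
          Sat M w (φ.map f) ↔ Sat M w ((bigOr l).map f)) := by
  right
  obtain ⟨l, l', hne, hne', hnf, hnf', hpos, hneg⟩ := NFT.main φ n hdeg
  exact ⟨l, hne, hnf, fun A' f _ M w =>
    (hpos A' f M w).trans (NFT.sat_bigOr_map f M w l).symm⟩
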